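/- There exists a sequence of continuous maps μ_N : {0,1}^ℕ → Prob(D) such that for every element s of Thompson's group V, lim_{N→∞} sup_{x ∈ {0,1}^ℕ} ‖ s·μ_N(x) − μ_N(s x) ‖_1 = 0. -/
import Mathlib


open Filter Topology

/-- Cantor space `{0,1}^ℕ`. -/
abbrev Cantor := ℕ → Bool

/-- `trunc x j = x_{[1,j]}0^∞`: agrees with `x` on the first `j` coordinates, `0` afterwards. -/
def trunc (x : Cantor) (j : ℕ) : Cantor := fun n => if n < j then x n else false

/-- `D`: the eventually-zero sequences. -/
def EvZero (x : Cantor) : Prop := ∃ k, ∀ l ≥ k, x l = false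

/-- The cylinder set `C(w)` of sequences beginning with the finite word `w`. -/
def cyl (w : List Bool) : Set Cantor := {x | ∀ i, (h : i < w.length) → x i = w.get ⟨i, h⟩}

/-- Concatenation `w·x` of a finite word with an infinite sequence. -/
def wordApp (w : List Bool) (x : Cantor) : Cantor :=
  fun n => if h : n < w.length then w.get ⟨n, h⟩ else x (n - w.length)

/-- `s` is given by the table `(w, z)`: the cylinders of the `w i` (resp. `z i`) partition
Cantor space, and `s (w i · x) = z i · x` for all `i, x`. -/
def IsTable (s : Cantor ≃ₜ Cantor) (n : ℕ) (w z : Fin n → List Bool) : Prop :=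
  (∀ x : Cantor, ∃! i, x ∈ cyl (w i)) ∧ (∀ x : Cantor, ∃! i, x ∈ cyl (z i)) ∧
  (∀ i x, s (wordApp (w i) x) = wordApp (z i) x)

/-- Membership in Thompson's group `V` (tabular form). -/
def InV (s : Cantor ≃ₜ Cantor) : Prop := ∃ n w z, IsTable s n w z

/-- `k(s)` for a table. -/
def kTable (n : ℕ) (w z : Fin n → List Bool) : ℕ :=
  Finset.univ.sup fun i => max (w i).length ((z i).length - (w i).length)

open Classical in
/-- `μ_N(x)(y) = (1/N) · #{1 ≤ j ≤ N : x_{[1,j]}0^∞ = y}`. -/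
noncomputable def muN (N : ℕ) (x : Cantor) (y : Cantor) : ℝ :=
  (N : ℝ)⁻¹ * ((Finset.Icc 1 N).filter fun j => trunc x j = y).card

/-! ### Auxiliary lemmas -/

open Classical in
lemma count_eq_sum (S : Finset ℕ) (a : ℕ → Cantor) (y : Cantor) :
    (((S.filter fun j => a j = y)).card : ℝ) = ∑ j ∈ S, if a j = y then (1:ℝ) else 0 := by
  rw [Finset.card_filter]
  push_cast
  rfl

open Classical in
lemma summable_single (c : Cantor) : Summable fun y : Cantor => if c = y then (1:ℝ) else 0 := by
  refine summable_of_ne_finset_zero (s := {c}) fun y hy => ?_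
  have : c ≠ y := fun h => hy (by simp [h])
  simp [this]

open Classical in
lemma tsum_ind (c : Cantor) : ∑' y : Cantor, (if c = y then (1:ℝ) else 0) = 1 := by
  rw [tsum_eq_single c (fun y hy => by simp [Ne.symm hy])]
  simp

open Classical in
lemma summable_count (S : Finset ℕ) (a : ℕ → Cantor) :
    Summable fun y : Cantor => (((S.filter fun j => a j = y)).card : ℝ) := by
  refine summable_of_ne_finset_zero (s := S.image a) fun y hy => ?_
  have : (S.filter fun j => a j = y) = ∅ :=
    Finset.filter_eq_empty_iff.mpr fun j hj h => hy (Finset.mem_image.mpr ⟨j, hj, h⟩)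
  simp [this]

open Classical in
lemma tsum_count (S : Finset ℕ) (a : ℕ → Cantor) :
    ∑' y : Cantor, (((S.filter fun j => a j = y)).card : ℝ) = S.card := by
  calc ∑' y : Cantor, (((S.filter fun j => a j = y)).card : ℝ)
      = ∑' y : Cantor, ∑ j ∈ S, if a j = y then (1:ℝ) else 0 :=
        tsum_congr fun y => count_eq_sum S a y
    _ = ∑ j ∈ S, ∑' y : Cantor, if a j = y then (1:ℝ) else 0 :=
        Summable.tsum_finsetSum fun j _ => summable_single (a j)
    _ = ∑ j ∈ S, (1:ℝ) := Finset.sum_congr rfl fun j _ => tsum_ind (a j)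
    _ = S.card := by simp

open Classical in
lemma count_dist_le (M : ℕ) (a b : ℕ → Cantor) (G : Finset ℕ) (σ : ℕ → ℕ)
    (hG : G ⊆ Finset.Icc 1 M)
    (hinj : ∀ j ∈ G, ∀ j' ∈ G, σ j = σ j' → j = j')
    (hmem : ∀ j ∈ G, σ j ∈ Finset.Icc 1 M)
    (hab : ∀ j ∈ G, a j = b (σ j)) :
    ∑' y : Cantor, |(((Finset.Icc 1 M).filter fun j => a j = y).card : ℝ)
        - (((Finset.Icc 1 M).filter fun j => b j = y).card : ℝ)|
      ≤ ((Finset.Icc 1 M \ G).card : ℝ) + ((Finset.Icc 1 M \ G.image σ).card : ℝ) := by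
  set I := Finset.Icc 1 M with hI
  set Gi := G.image σ with hGi
  have hGiI : Gi ⊆ I := Finset.image_subset_iff.mpr hmem
  have key : ∀ y : Cantor,
      |((I.filter fun j => a j = y).card : ℝ) - ((I.filter fun j => b j = y).card : ℝ)|
      ≤ (((I \ G).filter fun j => a j = y).card : ℝ)
        + (((I \ Gi).filter fun j => b j = y).card : ℝ) := by
    intro y
    have hsplitA : (I.filter fun j => a j = y).card
        = (G.filter fun j => a j = y).card + ((I \ G).filter fun j => a j = y).card := by
      rw [← Finset.card_union_of_disjoint
        (Finset.disjoint_filter_filter Finset.disjoint_sdiff),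
        ← Finset.filter_union, Finset.union_sdiff_of_subset hG]
    have hsplitB : (I.filter fun j => b j = y).card
        = (Gi.filter fun j => b j = y).card + ((I \ Gi).filter fun j => b j = y).card := by
      rw [← Finset.card_union_of_disjoint
        (Finset.disjoint_filter_filter Finset.disjoint_sdiff),
        ← Finset.filter_union, Finset.union_sdiff_of_subset hGiI]
    have hcomm : (G.filter fun j => a j = y).card = (Gi.filter fun j => b j = y).card := by
      refine Finset.card_bij (fun j _ => σ j) ?_ ?_ ?_
      · intro j hj
        obtain ⟨hjG, hjy⟩ := Finset.mem_filter.mp hj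
        exact Finset.mem_filter.mpr ⟨Finset.mem_image_of_mem σ hjG, by rw [← hab j hjG]; exact hjy⟩
      · intro j hj j' hj' h
        exact hinj j (Finset.mem_filter.mp hj).1 j' (Finset.mem_filter.mp hj').1 h
      · intro t ht
        obtain ⟨htGi, hty⟩ := Finset.mem_filter.mp ht
        obtain ⟨j, hjG, hjt⟩ := Finset.mem_image.mp htGi
        refine ⟨j, Finset.mem_filter.mpr ⟨hjG, ?_⟩, hjt⟩
        rw [hab j hjG, hjt]; exact hty
    rw [hsplitA, hsplitB, hcomm]
    push_cast
    have h1 : (0:ℝ) ≤ (((I \ G).filter fun j => a j = y).card : ℝ) := Nat.cast_nonneg _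
    have h2 : (0:ℝ) ≤ (((I \ Gi).filter fun j => b j = y).card : ℝ) := Nat.cast_nonneg _
    rw [abs_sub_le_iff]
    constructor <;> linarith
  have hsumL : Summable fun y : Cantor =>
      |((I.filter fun j => a j = y).card : ℝ) - ((I.filter fun j => b j = y).card : ℝ)| := by
    refine summable_of_ne_finset_zero (s := I.image a ∪ I.image b) fun y hy => ?_
    have h1 : (I.filter fun j => a j = y) = ∅ :=
      Finset.filter_eq_empty_iff.mpr fun j hj h =>
        hy (Finset.mem_union_left _ (Finset.mem_image.mpr ⟨j, hj, h⟩))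
    have h2 : (I.filter fun j => b j = y) = ∅ :=
      Finset.filter_eq_empty_iff.mpr fun j hj h =>
        hy (Finset.mem_union_right _ (Finset.mem_image.mpr ⟨j, hj, h⟩))
    simp [h1, h2]
  have hsumR : Summable fun y : Cantor =>
      (((I \ G).filter fun j => a j = y).card : ℝ)
        + (((I \ Gi).filter fun j => b j = y).card : ℝ) :=
    (summable_count _ a).add (summable_count _ b)
  calc ∑' y : Cantor, |((I.filter fun j => a j = y).card : ℝ)
          - ((I.filter fun j => b j = y).card : ℝ)|
      ≤ ∑' y : Cantor, ((((I \ G).filter fun j => a j = y).card : ℝ)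
          + (((I \ Gi).filter fun j => b j = y).card : ℝ)) := Summable.tsum_le_tsum key hsumL hsumR
    _ = ((I \ G).card : ℝ) + ((I \ Gi).card : ℝ) := by
        rw [Summable.tsum_add (summable_count _ a) (summable_count _ b), tsum_count, tsum_count]

lemma trunc_wordApp (w : List Bool) (x : Cantor) (m : ℕ) :
    trunc (wordApp w x) (w.length + m) = wordApp w (trunc x m) := by
  funext n
  by_cases h : n < w.length
  · simp [trunc, wordApp, h, show n < w.length + m from by omega]
  · by_cases h2 : n < w.length + m
    · simp [trunc, wordApp, h, h2, show n - w.length < m from by omega]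
    · simp [trunc, wordApp, h, h2, show ¬(n - w.length < m) from by omega]

lemma wordApp_shift {w : List Bool} {x : Cantor} (hx : x ∈ cyl w) :
    wordApp w (fun n => x (n + w.length)) = x := by
  funext n
  simp only [wordApp]
  split_ifs with h
  · exact (hx n h).symm
  · congr 1; omega

/-! ### Main theorem -/

/-- there is a sequence of continuous maps `μ_N : {0,1}^ℕ → Prob(D)` such that
for every `s` in Thompson's group `V`, `sup_x ‖s·μ_N(x) − μ_N(s x)‖₁ → 0`. -/
theorem stmt3 :
    ∃ μ : ℕ → Cantor → Cantor → ℝ,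
      (∀ N x y, 0 ≤ μ N x y) ∧
      (∀ N x y, ¬ EvZero y → μ N x y = 0) ∧
      (∀ N x, ∑' y : Cantor, μ N x y = 1) ∧
      (∀ N y, Continuous fun x => μ N x y) ∧
      (∀ s : Cantor ≃ₜ Cantor, InV s →
        Tendsto (fun N => ⨆ x : Cantor, ∑' y : Cantor, |μ N x (s.symm y) - μ N (s x) y|)
          atTop (𝓝 0)) := by
  classical
  refine ⟨fun N => muN (N+1), ?_, ?_, ?_, ?_, ?_⟩
  · intro N x y
    exact mul_nonneg (by positivity) (Nat.cast_nonneg _)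
  · intro N x y hy
    have : ((Finset.Icc 1 (N+1)).filter fun j => trunc x j = y) = ∅ := by
      refine Finset.filter_eq_empty_iff.mpr fun j hj h => hy ⟨j, fun l hl => ?_⟩
      rw [← h]
      simp [trunc, show ¬ l < j from by omega]
    simp [muN, this]
  · intro N x
    have h1 : ∀ y : Cantor, muN (N+1) x y
        = ((N+1 : ℕ) : ℝ)⁻¹ * (((Finset.Icc 1 (N+1)).filter fun j => (fun j => trunc x j) j = y).card : ℝ) := by
      intro y; rfl
    calc ∑' y : Cantor, muN (N+1) x y
        = ((N+1 : ℕ) : ℝ)⁻¹ * ∑' y : Cantor,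
            (((Finset.Icc 1 (N+1)).filter fun j => (fun j => trunc x j) j = y).card : ℝ) := by
          rw [← tsum_mul_left]; exact tsum_congr h1
      _ = 1 := by
          rw [tsum_count]
          simp [Nat.card_Icc]
          rw [inv_mul_cancel₀]
          positivity
  · intro N y
    have heq : (fun x : Cantor => muN (N+1) x y)
        = fun x : Cantor => ((N+1 : ℕ) : ℝ)⁻¹
            * ∑ j ∈ Finset.Icc 1 (N+1), if trunc x j = y then (1:ℝ) else 0 := by
      funext x
      show ((N+1 : ℕ) : ℝ)⁻¹ * _ = _
      rw [count_eq_sum (Finset.Icc 1 (N+1)) (fun j => trunc x j) y]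
    rw [heq]
    refine continuous_const.mul (continuous_finset_sum _ fun j _ => ?_)
    refine IsLocallyConstant.continuous ?_
    rw [IsLocallyConstant.iff_exists_open]
    intro x
    refine ⟨⋂ n ∈ Finset.range j, {z : Cantor | z n = x n},
      isOpen_biInter_finset fun n _ => ?_, by simp, ?_⟩
    · have : {z : Cantor | z n = x n} = (fun z : Cantor => z n) ⁻¹' {x n} := by
        ext z; simp [Set.mem_preimage]
      rw [this]
      exact IsOpen.preimage (continuous_apply n) (isOpen_discrete ({x n} : Set Bool))
    intro x' hx'
    have : trunc x' j = trunc x j := by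
      funext n
      by_cases hn : n < j
      · simpa [trunc, hn] using Set.mem_iInter₂.mp hx' n (Finset.mem_range.mpr hn)
      · simp [trunc, hn]
    rw [this]
  · intro s hs
    obtain ⟨n, w, z, hw, hz, htab⟩ := hs
    set k := kTable n w z with hk
    refine squeeze_zero (g := fun N : ℕ => (4 * (k:ℝ)) * (1 / ((N:ℝ) + 1))) (fun N => Real.iSup_nonneg fun x => tsum_nonneg fun y => abs_nonneg _)
      (fun N => ?_) ?_
    · -- sup_x dist ≤ 4k/(N+1)
      refine Real.iSup_le (fun x => ?_) (by positivity)
      set M := N + 1 with hM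
      obtain ⟨i, hxi, -⟩ := hw x
      have hLk : (w i).length ≤ k := le_trans (le_max_left _ _)
        (Finset.le_sup (f := fun i => max (w i).length ((z i).length - (w i).length))
          (Finset.mem_univ i))
      have hLzk : (z i).length - (w i).length ≤ k := le_trans (le_max_right _ _)
        (Finset.le_sup (f := fun i => max (w i).length ((z i).length - (w i).length))
          (Finset.mem_univ i))
      set x' : Cantor := fun m => x (m + (w i).length) with hx'
      have hxx' : wordApp (w i) x' = x := wordApp_shift hxi
      have hsx : s x = wordApp (z i) x' := by rw [← hxx']; exact htab i x'
      have key : ∀ j, k < j →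
          s (trunc x j) = trunc (s x) (j - (w i).length + (z i).length) := by
        intro j hj
        have e1 : trunc x j = wordApp (w i) (trunc x' (j - (w i).length)) := by
          have h2 := trunc_wordApp (w i) x' (j - (w i).length)
          rw [show (w i).length + (j - (w i).length) = j from by omega] at h2
          rw [← hxx']
          exact h2
        rw [e1, htab i, ← trunc_wordApp (z i) x' (j - (w i).length), hsx,
          Nat.add_comm ((z i).length) (j - (w i).length)]
      -- rewrite the summand
      have hcond : ∀ (y : Cantor) (j : ℕ), (trunc x j = s.symm y) ↔ (s (trunc x j) = y) := by
        intro y j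
        constructor
        · intro h; rw [h]; simp
        · intro h; rw [← h]; simp
      have hrw : ∀ y : Cantor, |muN M x (s.symm y) - muN M (s x) y|
          = ((M : ℕ) : ℝ)⁻¹ *
            |(((Finset.Icc 1 M).filter fun j => (fun j => s (trunc x j)) j = y).card : ℝ)
              - (((Finset.Icc 1 M).filter fun j => (fun j => trunc (s x) j) j = y).card : ℝ)| := by
        intro y
        have hfe : ((Finset.Icc 1 M).filter fun j => trunc x j = s.symm y)
            = ((Finset.Icc 1 M).filter fun j => s (trunc x j) = y) :=
          Finset.filter_congr fun j _ => hcond y j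
        show |((M : ℕ) : ℝ)⁻¹ * _ - ((M : ℕ) : ℝ)⁻¹ * _| = _
        rw [hfe, ← mul_sub, abs_mul, abs_of_nonneg (by positivity)]
      set G : Finset ℕ := Finset.Ioc k (M - k) with hG
      have hGsub : G ⊆ Finset.Icc 1 M := by
        intro j hj
        rw [Finset.mem_Ioc] at hj
        rw [Finset.mem_Icc]
        omega
      have hbound := count_dist_le M (fun j => s (trunc x j)) (fun j => trunc (s x) j) G
        (fun j => j - (w i).length + (z i).length) hGsub
        (by
          intro j hj j' hj' h
          have h' : j - (w i).length + (z i).length = j' - (w i).length + (z i).length := h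
          rw [Finset.mem_Ioc] at hj hj'
          omega)
        (by
          intro j hj
          rw [Finset.mem_Ioc] at hj
          simp only [Finset.mem_Icc]
          omega)
        (fun j hj => key j (Finset.mem_Ioc.mp hj).1)
      have hcard1 : (Finset.Icc 1 M \ G).card ≤ 2 * k := by
        rw [Finset.card_sdiff_of_subset hGsub]
        simp only [Nat.card_Icc, hG, Nat.card_Ioc]
        omega
      have hcard2 : (Finset.Icc 1 M \ G.image fun j => j - (w i).length + (z i).length).card ≤ 2 * k := by
        rw [Finset.card_sdiff_of_subset (Finset.image_subset_iff.mpr (by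
          intro j hj
          rw [Finset.mem_Ioc] at hj
          simp only [Finset.mem_Icc]
          omega))]
        rw [Finset.card_image_of_injOn (by
          intro j hj j' hj' h
          have h' : j - (w i).length + (z i).length = j' - (w i).length + (z i).length := h
          rw [Finset.mem_coe, Finset.mem_Ioc] at hj hj'
          omega)]
        simp only [Nat.card_Icc, hG, Nat.card_Ioc]
        omega
      calc ∑' y : Cantor, |muN M x (s.symm y) - muN M (s x) y|
          = ((M : ℕ) : ℝ)⁻¹ * ∑' y : Cantor,
              |(((Finset.Icc 1 M).filter fun j => (fun j => s (trunc x j)) j = y).card : ℝ)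
                - (((Finset.Icc 1 M).filter fun j => (fun j => trunc (s x) j) j = y).card : ℝ)| := by
            rw [← tsum_mul_left]; exact tsum_congr hrw
        _ ≤ ((M : ℕ) : ℝ)⁻¹ * (((Finset.Icc 1 M \ G).card : ℝ)
              + ((Finset.Icc 1 M \ G.image fun j => j - (w i).length + (z i).length).card : ℝ)) :=
            mul_le_mul_of_nonneg_left hbound (by positivity)
        _ ≤ ((M : ℕ) : ℝ)⁻¹ * ((2 * k : ℕ) + (2 * k : ℕ)) := by
            refine mul_le_mul_of_nonneg_left ?_ (by positivity)
            have c1 : ((Finset.Icc 1 M \ G).card : ℝ) ≤ ((2 * k : ℕ) : ℝ) := Nat.cast_le.mpr hcard1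
            have c2 : ((Finset.Icc 1 M \ G.image fun j => j - (w i).length + (z i).length).card : ℝ)
                ≤ ((2 * k : ℕ) : ℝ) := Nat.cast_le.mpr hcard2
            linarith
        _ = (4 * k : ℝ) * (1 / ((N : ℝ) + 1)) := by
            simp only [hM]
            push_cast
            field_simp
            ring
    · have := tendsto_one_div_add_atTop_nhds_zero_nat.const_mul (4 * (k:ℝ))
      simpa using this
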